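/- If J ⊆ I are right ideals of R with J·R^e = I·R^e, then Kdim(I/J) < m (with the convention that this holds when I = J). -/

import Mathlib

set_option linter.unusedVariables false

/-- `devLE k A` : the deviation (in the Gabriel–Rentschler sense) of the
poset `A` is `≤ k` (for `k : ℕ`).  `devLE 0 A` says every descending chain
eventually stabilizes (DCC), and `devLE (k+1) A` says that in any descending
chain all but finitely many of the factor intervals have deviation `≤ k`. -/
def devLE : ℕ → (A : Type*) → [inst : Preorder A] → Prop
  | 0, A, _ => ∀ f : ℕ → A, Antitone f → ∃ N, ∀ i, N ≤ i → f (i + 1) = f i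
  | (k+1), A, _ => ∀ f : ℕ → A, Antitone f →
      ∃ N, ∀ i, N ≤ i → devLE k (Set.Icc (f (i + 1)) (f i))

/-- The Gabriel–Rentschler Krull dimension of the right `R`-module `M`
(a module over `Rᵐᵒᵖ`) is `≤ k` : the deviation of its submodule lattice is `≤ k`. -/
def kdimLE (R M : Type*) [Ring R] [AddCommGroup M] [Module Rᵐᵒᵖ M] (k : ℕ) : Prop :=
  devLE k (Submodule Rᵐᵒᵖ M)

/-- `c` is a regular element of `R` (neither a left nor a right zero divisor). -/
def regElem (R : Type*) [Ring R] (c : R) : Prop :=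
  (∀ x : R, c * x = 0 → x = 0) ∧ (∀ x : R, x * c = 0 → x = 0)

/-- `C_m = {c ∈ R | Kdim(R/cR) < m}` (for `0 < m`, `Kdim < m` is `Kdim ≤ m-1`). -/
def rCm (R : Type*) [Ring R] (m : ℕ) : Set R :=
  {c | kdimLE R (R ⧸ Submodule.span Rᵐᵒᵖ ({c} : Set R)) (m - 1)}

/-- The m-Gabriel filter `g = {right ideals I | Kdim(R/I) < m}`. -/
def gFilt (R : Type*) [Ring R] (m : ℕ) : Set (Submodule Rᵐᵒᵖ R) :=
  {I | kdimLE R (R ⧸ I) (m - 1)}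

/-- A right ideal `P` is a (two-sided) prime ideal of `R`. -/
def isTwoSidedPrime (R : Type*) [Ring R] (P : Submodule Rᵐᵒᵖ R) : Prop :=
  (∀ a ∈ P, ∀ r : R, r * a ∈ P) ∧ P ≠ ⊤ ∧
    ∀ a b : R, (∀ r : R, a * r * b ∈ P) → a ∈ P ∨ b ∈ P

/-- `c ∈ C(P)` : `c` is regular modulo `P`. -/
def regModP (R : Type*) [Ring R] (P : Submodule Rᵐᵒᵖ R) (c : R) : Prop :=
  ∀ x : R, (c * x ∈ P → x ∈ P) ∧ (x * c ∈ P → x ∈ P)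

/-- `X_m` : the set of (two-sided) prime ideals `P` with `Kdim(R/P) = m`. -/
def xSet (R : Type*) [Ring R] (m : ℕ) : Set (Submodule Rᵐᵒᵖ R) :=
  {P | isTwoSidedPrime R P ∧ kdimLE R (R ⧸ P) m ∧ ¬ kdimLE R (R ⧸ P) (m - 1)}

/-- `V_m = ⋂_{P ∈ X_m} C(P)`. -/
def vSet (R : Type*) [Ring R] (m : ℕ) : Set R :=
  {v | ∀ P ∈ xSet R m, regModP R P v}

/-- Left multiplication by `a` as a right-module (`Rᵐᵒᵖ`-module) endomorphism of `R`. -/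
def lmulHom (R : Type*) [Ring R] (a : R) : R →ₗ[Rᵐᵒᵖ] R where
  toFun x := a * x
  map_add' x y := mul_add a x y
  map_smul' r x := by
    simp [MulOpposite.smul_eq_mul_unop, mul_assoc]

/-- `Q` is a classical right quotient ring of `R` via `f : R →+* Q` :
`f` is injective, regular elements of `R` become units in `Q`, and every
element of `Q` is a right fraction `f a * (f s)⁻¹`. -/
def isRightQuotientRing (R Q : Type*) [Ring R] [Ring Q] (f : R →+* Q) : Prop :=
  Function.Injective f ∧ (∀ s : R, regElem R s → IsUnit (f s)) ∧
    ∀ q : Q, ∃ a s : R, regElem R s ∧ q * f s = f a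

/-- `R^e = {q ∈ Q | qJ ⊆ R for some J in the m-Gabriel filter}`, as a subset of `Q`. -/
def reSet (R Q : Type*) [Ring R] [Ring Q] (f : R →+* Q) (m : ℕ) : Set Q :=
  {q | ∃ J ∈ gFilt R m, ∀ j ∈ J, ∃ r : R, q * f j = f r}

/-- The extension `A·R^e` of a set `A ⊆ R` : the additive subgroup of `Q`
generated by products `f a * q` with `a ∈ A`, `q ∈ R^e` (a right ideal of `R^e`). -/
def extSet (R Q : Type*) [Ring R] [Ring Q] (f : R →+* Q) (m : ℕ) (A : Set R) : Set Q :=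
  (AddSubgroup.closure {x : Q | ∃ a ∈ A, ∃ q ∈ reSet R Q f m, x = f a * q} : Set Q)

/-- The right `R`-module structure on `Q` induced by `f : R →+* Q`. -/
def qMod (R Q : Type*) [Ring R] [Ring Q] (f : R →+* Q) : Module Rᵐᵒᵖ Q :=
  Module.compHom Q (RingHom.op f)

lemma devLE_subsingleton : ∀ (k : ℕ) (A : Type*) [Preorder A], Subsingleton A → devLE k A
  | 0, A, _inst, h => fun f _ => ⟨0, fun i _ => h.elim _ _⟩
  | (k+1), A, _inst, h => fun f _ => ⟨0, fun i _ =>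
      devLE_subsingleton k _ ⟨fun a b => Subtype.ext (h.elim _ _)⟩⟩

lemma devLE_of_map : ∀ (k : ℕ) (A B : Type*) [Preorder A] [Preorder B]
    (φ : A → B), Monotone φ → (∀ a b : A, a ≤ b → φ a = φ b → a = b) →
    devLE k B → devLE k A
  | 0, A, B, _, _, φ, hmono, hinj, hB => fun f hf => by
      obtain ⟨N, hN⟩ := hB (φ ∘ f) (hmono.comp_antitone hf)
      exact ⟨N, fun i hi => hinj _ _ (hf (Nat.le_succ i)) (hN i hi)⟩
  | (k+1), A, B, _, _, φ, hmono, hinj, hB => fun f hf => by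
      obtain ⟨N, hN⟩ := hB (φ ∘ f) (hmono.comp_antitone hf)
      refine ⟨N, fun i hi => ?_⟩
      exact devLE_of_map k _ _ (fun x => (⟨φ x.1, hmono x.2.1, hmono x.2.2⟩ :
          Set.Icc ((φ ∘ f) (i+1)) ((φ ∘ f) i)))
        (fun x y hxy => hmono hxy)
        (fun x y hxy h => Subtype.ext (hinj _ _ hxy (congrArg Subtype.val h)))
        (hN i hi)

lemma devLE_prod : ∀ (k : ℕ) (A B : Type*) [Preorder A] [Preorder B],
    devLE k A → devLE k B → devLE k (A × B)
  | 0, A, B, _, _, hA, hB => fun f hf => by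
      obtain ⟨N₁, h₁⟩ := hA (fun i => (f i).1) (fun i j h => (hf h).1)
      obtain ⟨N₂, h₂⟩ := hB (fun i => (f i).2) (fun i j h => (hf h).2)
      exact ⟨max N₁ N₂, fun i hi => Prod.ext (h₁ i (le_trans (le_max_left _ _) hi))
        (h₂ i (le_trans (le_max_right _ _) hi))⟩
  | (k+1), A, B, _, _, hA, hB => fun f hf => by
      obtain ⟨N₁, h₁⟩ := hA (fun i => (f i).1) (fun i j h => (hf h).1)
      obtain ⟨N₂, h₂⟩ := hB (fun i => (f i).2) (fun i j h => (hf h).2)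
      refine ⟨max N₁ N₂, fun i hi => ?_⟩
      have hP := devLE_prod k _ _ (h₁ i (le_trans (le_max_left _ _) hi))
        (h₂ i (le_trans (le_max_right _ _) hi))
      exact devLE_of_map k _ _
        (fun x => ((⟨x.1.1, x.2.1.1, x.2.2.1⟩ : Set.Icc ((f (i+1)).1) ((f i).1)),
                   (⟨x.1.2, x.2.1.2, x.2.2.2⟩ : Set.Icc ((f (i+1)).2) ((f i).2))))
        (fun x y hxy => by
          simp only [Prod.mk_le_mk, Subtype.mk_le_mk]; exact ⟨hxy.1, hxy.2⟩)
        (fun x y _ h => Subtype.ext (Prod.ext (congrArg (Subtype.val ∘ Prod.fst) h)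
          (congrArg (Subtype.val ∘ Prod.snd) h)))
        hP


section Mod
variable {R M M' : Type*} [Ring R] [AddCommGroup M] [Module Rᵐᵒᵖ M]
  [AddCommGroup M'] [Module Rᵐᵒᵖ M'] {k : ℕ}

lemma kdimLE_of_injective (g : M →ₗ[Rᵐᵒᵖ] M') (hg : Function.Injective g)
    (h : kdimLE R M' k) : kdimLE R M k :=
  devLE_of_map k _ _ (Submodule.map g) (fun _ _ h => Submodule.map_mono h)
    (fun p q _ he => Submodule.map_injective_of_injective hg he) h

lemma kdimLE_of_surjective (g : M →ₗ[Rᵐᵒᵖ] M') (hg : Function.Surjective g)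
    (h : kdimLE R M k) : kdimLE R M' k :=
  devLE_of_map k _ _ (Submodule.comap g) (fun _ _ h => Submodule.comap_mono h)
    (fun p q _ he => Submodule.comap_injective_of_surjective hg he) h

lemma kdimLE_ext (N : Submodule Rᵐᵒᵖ M)
    (h1 : kdimLE R N k) (h2 : kdimLE R (M ⧸ N) k) : kdimLE R M k := by
  have hprod := devLE_prod k _ _ h1 h2
  refine devLE_of_map k _ _
    (fun S => (Submodule.comap N.subtype S, Submodule.map N.mkQ S)) ?_ ?_ hprod
  · intro a b hab
    exact ⟨Submodule.comap_mono hab, Submodule.map_mono hab⟩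
  · intro S T hST he
    have e1 : N ⊓ S = N ⊓ T := by
      have := congrArg (Submodule.map N.subtype) (congrArg Prod.fst he)
      simpa [Submodule.map_comap_subtype] using this
    have e2 : N ⊔ S = N ⊔ T := by
      have := congrArg (Submodule.comap N.mkQ) (congrArg Prod.snd he)
      simpa [Submodule.comap_map_mkQ] using this
    have hTle : T ≤ S ⊔ N := by rw [sup_comm, e2]; exact le_sup_right
    refine (calc T = (S ⊔ N) ⊓ T := (inf_eq_right.mpr hTle).symm
      _ = S ⊔ (N ⊓ T) := sup_inf_assoc_of_le N hST
      _ = S ⊔ (N ⊓ S) := by rw [e1]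
      _ = S := sup_eq_left.mpr inf_le_right).symm

lemma kdimLE_mono {N N' : Submodule Rᵐᵒᵖ M} (hle : N ≤ N')
    (h : kdimLE R N' k) : kdimLE R N k :=
  kdimLE_of_injective (Submodule.inclusion hle) (Submodule.inclusion_injective hle) h

lemma kdimLE_sup {N₁ N₂ : Submodule Rᵐᵒᵖ M}
    (h1 : kdimLE R N₁ k) (h2 : kdimLE R N₂ k) : kdimLE R ↥(N₁ ⊔ N₂) k := by
  set P : Submodule Rᵐᵒᵖ ↥(N₁ ⊔ N₂) := Submodule.comap (N₁ ⊔ N₂).subtype N₁ with hP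
  refine kdimLE_ext P ?_ ?_
  · exact kdimLE_of_injective (Submodule.comapSubtypeEquivOfLe le_sup_left).toLinearMap
      (Submodule.comapSubtypeEquivOfLe le_sup_left).injective h1
  · refine kdimLE_of_surjective
      (P.mkQ ∘ₗ Submodule.inclusion (le_sup_right : N₂ ≤ N₁ ⊔ N₂)) ?_ h2
    intro y
    obtain ⟨x, rfl⟩ := Submodule.Quotient.mk_surjective P y
    obtain ⟨a, ha, b, hb, hab⟩ := Submodule.mem_sup.mp x.2
    refine ⟨⟨b, hb⟩, ?_⟩
    simp only [LinearMap.comp_apply, Submodule.mkQ_apply]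
    rw [Submodule.Quotient.eq]
    refine Submodule.mem_comap.mpr ?_
    show (((Submodule.inclusion _ ⟨b, hb⟩ : ↥(N₁ ⊔ N₂)) : ↥(N₁ ⊔ N₂)) - x : ↥(N₁ ⊔ N₂)).1 ∈ N₁
    have : ((Submodule.inclusion (le_sup_right : N₂ ≤ N₁ ⊔ N₂) ⟨b, hb⟩ : ↥(N₁ ⊔ N₂)) : M) = b := rfl
    simp only [AddSubgroupClass.coe_sub, this]
    rw [show b - x.1 = -a by rw [← hab]; abel]
    exact neg_mem ha

lemma kdimLE_of_gen [IsNoetherian Rᵐᵒᵖ M]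
    (h : ∀ x : M, ∃ N : Submodule Rᵐᵒᵖ M, x ∈ N ∧ kdimLE R ↥N k) : kdimLE R M k := by
  classical
  have key : ∀ s : Finset M, kdimLE R ↥(Submodule.span Rᵐᵒᵖ (↑s : Set M)) k := by
    intro s
    induction s using Finset.induction_on with
    | empty =>
        refine devLE_subsingleton k _ ?_
        haveI hss : Subsingleton ↥(Submodule.span Rᵐᵒᵖ (↑(∅ : Finset M) : Set M)) := by
          constructor
          intro a b
          apply Subtype.ext
          have ha := a.2; have hb := b.2
          simp only [Finset.coe_empty, Submodule.span_empty, Submodule.mem_bot] at ha hb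
          rw [ha, hb]
        infer_instance
    | @insert a s ha ih =>
        have hsp : Submodule.span Rᵐᵒᵖ (↑(insert a s) : Set M)
            = Submodule.span Rᵐᵒᵖ {a} ⊔ Submodule.span Rᵐᵒᵖ (↑s : Set M) := by
          rw [Finset.coe_insert, Submodule.span_insert]
        have hcyc : kdimLE R ↥(Submodule.span Rᵐᵒᵖ ({a} : Set M)) k := by
          obtain ⟨N, haN, hN⟩ := h a
          exact kdimLE_mono (Submodule.span_le.mpr (Set.singleton_subset_iff.mpr haN)) hN
        exact kdimLE_mono (le_of_eq hsp) (kdimLE_sup hcyc ih)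
  obtain ⟨s, hs⟩ := IsNoetherian.noetherian (⊤ : Submodule Rᵐᵒᵖ M)
  have := key s
  rw [hs] at this
  exact kdimLE_of_surjective (Submodule.topEquiv : (⊤ : Submodule Rᵐᵒᵖ M) ≃ₗ[Rᵐᵒᵖ] M).toLinearMap
    Submodule.topEquiv.surjective this

end Mod

section Filt
variable {R : Type*} [Ring R] {m : ℕ}

lemma gFilt_top : (⊤ : Submodule Rᵐᵒᵖ R) ∈ gFilt R m := by
  haveI : Subsingleton (R ⧸ (⊤ : Submodule Rᵐᵒᵖ R)) :=
    Submodule.Quotient.subsingleton_iff.mpr rfl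
  exact devLE_subsingleton _ _ inferInstance

lemma gFilt_inf {J₁ J₂ : Submodule Rᵐᵒᵖ R} (h1 : J₁ ∈ gFilt R m) (h2 : J₂ ∈ gFilt R m) :
    J₁ ⊓ J₂ ∈ gFilt R m := by
  set φ : (R ⧸ (J₁ ⊓ J₂)) →ₗ[Rᵐᵒᵖ] (R ⧸ J₁) :=
    Submodule.mapQ _ _ LinearMap.id (fun x hx => hx.1) with hφ
  refine kdimLE_ext (LinearMap.ker φ) ?_ ?_
  · -- ker φ embeds in R ⧸ J₂
    set ψ : (R ⧸ (J₁ ⊓ J₂)) →ₗ[Rᵐᵒᵖ] (R ⧸ J₂) :=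
      Submodule.mapQ _ _ LinearMap.id (fun x hx => hx.2) with hψ
    refine kdimLE_of_injective (ψ ∘ₗ (LinearMap.ker φ).subtype) ?_ h2
    intro x y hxy
    apply Subtype.ext
    obtain ⟨a, ha⟩ := Submodule.Quotient.mk_surjective _ x.1
    obtain ⟨b, hb⟩ := Submodule.Quotient.mk_surjective _ y.1
    have hx1 : φ x.1 = 0 := x.2
    have hy1 : φ y.1 = 0 := y.2
    simp only [LinearMap.comp_apply, Submodule.subtype_apply] at hxy
    rw [← ha] at hx1
    rw [← hb] at hy1
    rw [← ha, ← hb] at hxy ⊢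
    rw [hφ] at hx1 hy1
    rw [hψ] at hxy
    simp only [Submodule.mapQ_apply, LinearMap.id_apply, Submodule.Quotient.mk_eq_zero] at hx1 hy1
    simp only [Submodule.mapQ_apply, LinearMap.id_apply] at hxy
    rw [Submodule.Quotient.eq] at hxy ⊢
    exact ⟨sub_mem hx1 hy1, hxy⟩
  · have hr : kdimLE R ↥(LinearMap.range φ) (m-1) :=
      kdimLE_of_injective (LinearMap.range φ).subtype (Submodule.injective_subtype _) h1
    exact kdimLE_of_injective (LinearMap.quotKerEquivRange φ).toLinearMap
      (LinearMap.quotKerEquivRange φ).injective hr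
end Filt

section Key
variable {R Q : Type*} [Ring R] [Ring Q] (f : R →+* Q) (m : ℕ)

lemma one_mem_reSet : (1 : Q) ∈ reSet R Q f m :=
  ⟨⊤, gFilt_top, fun j _ => ⟨j, by rw [one_mul]⟩⟩

lemma mem_extSet_of_mem (A : Set R) {a : R} (ha : a ∈ A) : f a ∈ extSet R Q f m A :=
  AddSubgroup.subset_closure ⟨a, ha, 1, one_mem_reSet f m, (mul_one _).symm⟩

lemma extSet_key (J : Submodule Rᵐᵒᵖ R) :
    ∀ x ∈ extSet R Q f m (↑J : Set R), ∃ J' ∈ gFilt R m,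
      ∀ j ∈ J', ∃ r ∈ J, x * f j = f r := by
  intro x hx
  induction hx using AddSubgroup.closure_induction with
  | mem x hxg =>
      obtain ⟨a, haJ, q, ⟨Jq, hJq, hq⟩, rfl⟩ := hxg
      refine ⟨Jq, hJq, fun j hj => ?_⟩
      obtain ⟨r, hr⟩ := hq j hj
      refine ⟨a * r, ?_, by rw [mul_assoc, hr, map_mul]⟩
      have : (MulOpposite.op r) • a ∈ J := J.smul_mem _ haJ
      simpa [MulOpposite.smul_eq_mul_unop] using this
  | zero => exact ⟨⊤, gFilt_top, fun j _ => ⟨0, J.zero_mem, by simp⟩⟩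
  | add x y hxm hym hx hy =>
      obtain ⟨J₁, h1, hx1⟩ := hx
      obtain ⟨J₂, h2, hy2⟩ := hy
      refine ⟨J₁ ⊓ J₂, gFilt_inf h1 h2, fun j hj => ?_⟩
      obtain ⟨r₁, hr₁J, hr₁⟩ := hx1 j hj.1
      obtain ⟨r₂, hr₂J, hr₂⟩ := hy2 j hj.2
      exact ⟨r₁ + r₂, J.add_mem hr₁J hr₂J, by rw [add_mul, hr₁, hr₂, map_add]⟩
  | neg x hxm hx =>
      obtain ⟨J₁, h1, hx1⟩ := hx
      refine ⟨J₁, h1, fun j hj => ?_⟩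
      obtain ⟨r, hrJ, hr⟩ := hx1 j hj
      exact ⟨-r, J.neg_mem hrJ, by rw [neg_mul, hr, map_neg]⟩

end Key

theorem stmt17 (R : Type) [Ring R] [Nontrivial R] [IsNoetherian Rᵐᵒᵖ R]
    (hprime : ∀ a b : R, (∀ r : R, a * r * b = 0) → a = 0 ∨ b = 0)
    (n m : ℕ) (hm : 0 < m) (hmn : m < n)
    (hdim : kdimLE R R n ∧ ¬ kdimLE R R (n - 1))
    (Q : Type) [Ring Q] (f : R →+* Q) (hQ : isRightQuotientRing R Q f) :
    ∀ I J : Submodule Rᵐᵒᵖ R, J ≤ I → extSet R Q f m ↑J = extSet R Q f m ↑I →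
      kdimLE R (↥I ⧸ Submodule.comap I.subtype J) (m - 1) := by
  intro I J hJI hext
  haveI : IsNoetherian Rᵐᵒᵖ ↥I := inferInstance
  refine kdimLE_of_gen ?_
  intro x
  obtain ⟨⟨a, haI⟩, rfl⟩ := Submodule.Quotient.mk_surjective _ x
  have hfa : f a ∈ extSet R Q f m (↑J : Set R) := by
    rw [hext]; exact mem_extSet_of_mem f m _ haI
  obtain ⟨J', hJ'g, hJ'⟩ := extSet_key f m J (f a) hfa
  have hann : ∀ j ∈ J', a * j ∈ J := by
    intro j hj
    obtain ⟨r, hrJ, hr⟩ := hJ' j hj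
    have : f (a * j) = f r := by rw [map_mul]; exact hr
    exact (hQ.1 this) ▸ hrJ
  -- the cyclic map ψ : R → I/J', r ↦ [a * r]
  set ψ : R →ₗ[Rᵐᵒᵖ] (↥I ⧸ Submodule.comap I.subtype J) :=
    { toFun := fun r => Submodule.Quotient.mk
        ⟨a * r, by simpa [MulOpposite.smul_eq_mul_unop] using I.smul_mem (MulOpposite.op r) haI⟩
      map_add' := fun r s => by
        show Submodule.Quotient.mk _ = Submodule.Quotient.mk _ + Submodule.Quotient.mk _
        rw [← Submodule.Quotient.mk_add]
        congr 1
        apply Subtype.ext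
        exact mul_add a r s
      map_smul' := fun c r => by
        show Submodule.Quotient.mk _ = c • Submodule.Quotient.mk _
        rw [← Submodule.Quotient.mk_smul]
        congr 1
        apply Subtype.ext
        show a * (r * c.unop) = (a * r) * c.unop
        rw [mul_assoc] } with hψ
  have hker : J' ≤ LinearMap.ker ψ := by
    intro j hj
    simp only [LinearMap.mem_ker, hψ, LinearMap.coe_mk, AddHom.coe_mk,
      Submodule.Quotient.mk_eq_zero, Submodule.mem_comap, Submodule.subtype_apply]
    exact hann j hj
  have hrange : kdimLE R ↥(LinearMap.range ψ) (m - 1) := by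
    refine kdimLE_of_surjective
      (Submodule.liftQ J' ψ.rangeRestrict (by rwa [LinearMap.ker_rangeRestrict])) ?_ hJ'g
    intro y
    obtain ⟨r, hr⟩ := ψ.surjective_rangeRestrict y
    exact ⟨Submodule.Quotient.mk r, by rw [Submodule.liftQ_apply]; exact hr⟩
  refine ⟨LinearMap.range ψ, ⟨(1 : R), ?_⟩, hrange⟩
  simp only [hψ, LinearMap.coe_mk, AddHom.coe_mk]
  congr 1
  exact Subtype.ext (mul_one a)
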